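/- Let γ ∈ (2/3, 1) and let 0 < ε < γ/(1−γ) − 2. Let (Z_k)_{k≥1} be independent random variables with P(Z_k = 1) = k^{−γ} = 1 − P(Z_k = 0), and define the growth times τ_0 = 0 and τ_k = inf{n > τ_{k−1} : Z_n = 1} for k ≥ 1, with Δτ_k = τ_{k+1} − τ_k. Then P(Δτ_i < i^{1+ε} for infinitely many i) = 0; that is, almost surely Δτ_i ≥ i^{1+ε} for all sufficiently large i. -/

import Mathlib

open MeasureTheory ProbabilityTheory Finset Filter
open scoped ENNReal

/-- The growth times of the tree builder random walk: `τ_0 = 0` and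
`τ_k = inf{n > τ_{k-1} : Z_n = 1}` for `k ≥ 1` (with the convention `sInf ∅ = 0`). -/
noncomputable def growthTime {Ω : Type*} (Z : ℕ → Ω → ℕ) : ℕ → Ω → ℕ
  | 0, _ => 0
  | k + 1, ω => sInf {n : ℕ | growthTime Z k ω < n ∧ Z n ω = 1}

namespace GrowthAux

variable {Ω : Type*}

/-- number of successes in `[1,t]`. -/
def sc (Z : ℕ → Ω → ℕ) (t : ℕ) (ω : Ω) : ℕ :=
  ((Finset.Icc 1 t).filter (fun n => Z n ω = 1)).card

lemma sc_mono (Z : ℕ → Ω → ℕ) {t t' : ℕ} (h : t ≤ t') (ω : Ω) : sc Z t ω ≤ sc Z t' ω :=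
  Finset.card_le_card (Finset.filter_subset_filter _ (Finset.Icc_subset_Icc_right h))

lemma growth_step (Z : ℕ → Ω → ℕ) (ω : Ω) (hω : ∀ N : ℕ, ∃ n, N < n ∧ Z n ω = 1) (k : ℕ) :
    growthTime Z k ω < growthTime Z (k+1) ω ∧ Z (growthTime Z (k+1) ω) ω = 1 ∧
      ∀ m, growthTime Z k ω < m → m < growthTime Z (k+1) ω → ¬ (Z m ω = 1) := by
  have hne : {n : ℕ | growthTime Z k ω < n ∧ Z n ω = 1}.Nonempty := by
    obtain ⟨n, h1, h2⟩ := hω (growthTime Z k ω); exact ⟨n, h1, h2⟩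
  have heq : growthTime Z (k+1) ω = sInf {n : ℕ | growthTime Z k ω < n ∧ Z n ω = 1} := rfl
  have hmem := Nat.sInf_mem hne
  rw [← heq] at hmem
  refine ⟨hmem.1, hmem.2, fun m h1 h2 h3 => ?_⟩
  have : growthTime Z (k+1) ω ≤ m := by rw [heq]; exact Nat.sInf_le ⟨h1, h3⟩
  omega

lemma sc_growth (Z : ℕ → Ω → ℕ) (ω : Ω) (hω : ∀ N : ℕ, ∃ n, N < n ∧ Z n ω = 1) :
    ∀ k, sc Z (growthTime Z k ω) ω = k := by
  intro k
  induction k with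
  | zero => simp [sc, growthTime]
  | succ k ih =>
    obtain ⟨hlt, hone, hnone⟩ := growth_step Z ω hω k
    have hins : (Finset.Icc 1 (growthTime Z (k+1) ω)).filter (fun n => Z n ω = 1)
        = insert (growthTime Z (k+1) ω)
            ((Finset.Icc 1 (growthTime Z k ω)).filter (fun n => Z n ω = 1)) := by
      ext n
      simp only [Finset.mem_filter, Finset.mem_insert, Finset.mem_Icc]
      constructor
      · rintro ⟨⟨h1, h2⟩, h3⟩
        rcases eq_or_lt_of_le h2 with h | h
        · exact Or.inl h
        · right
          refine ⟨⟨h1, ?_⟩, h3⟩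
          by_contra hc
          exact hnone n (by omega) h h3
      · rintro (rfl | ⟨⟨h1, h2⟩, h3⟩)
        · exact ⟨⟨by omega, le_rfl⟩, hone⟩
        · exact ⟨⟨h1, by omega⟩, h3⟩
    have hnotmem : growthTime Z (k+1) ω ∉
        (Finset.Icc 1 (growthTime Z k ω)).filter (fun n => Z n ω = 1) := by
      simp only [Finset.mem_filter, Finset.mem_Icc]
      rintro ⟨⟨-, h2⟩, -⟩
      omega
    rw [sc, hins, Finset.card_insert_of_notMem hnotmem]
    rw [sc] at ih
    omega

/-- deterministic inclusion: on the good event, a small increment implies one of two events. -/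
lemma incl (Z : ℕ → Ω → ℕ) (ω : Ω) (hω : ∀ N : ℕ, ∃ n, N < n ∧ Z n ω = 1)
    (i : ℕ) (hi : 1 ≤ i) (n L : ℕ)
    (hΔ : growthTime Z (i+1) ω - growthTime Z i ω < L) :
    (i ≤ sc Z n ω) ∨
      ∃ t, n < t ∧ (sc Z t ω = i ∧ Z t ω = 1) ∧
        ∃ j, t < j ∧ j ≤ t + L ∧ Z j ω = 1 := by
  obtain ⟨i', rfl⟩ : ∃ i', i = i' + 1 := ⟨i - 1, by omega⟩
  obtain ⟨hlt₀, hone, -⟩ := growth_step Z ω hω i'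
  obtain ⟨hlt₁, hone₁, -⟩ := growth_step Z ω hω (i' + 1)
  have hsct := sc_growth Z ω hω (i' + 1)
  by_cases h : growthTime Z (i'+1) ω ≤ n
  · left
    calc i' + 1 = sc Z (growthTime Z (i'+1) ω) ω := hsct.symm
      _ ≤ sc Z n ω := sc_mono Z h ω
  · right
    exact ⟨growthTime Z (i'+1) ω, by omega, ⟨hsct, hone⟩,
      growthTime Z (i'+1+1) ω, hlt₁, by omega, hone₁⟩

lemma key_rpow (γ : ℝ) (hγ0 : 0 < γ) (hγ1 : γ < 1) (x : ℝ) (hx : 0 ≤ x) :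
    (x+1) ^ (-γ) ≤ ((x+1) ^ (1-γ) - x ^ (1-γ)) / (1-γ) := by
  have hy : (0:ℝ) < x + 1 := by linarith
  have h1γ : (0:ℝ) < 1 - γ := by linarith
  have hgm : (x+1) ^ γ * x ^ (1-γ) ≤ γ * (x+1) + (1-γ) * x :=
    Real.geom_mean_le_arith_mean2_weighted hγ0.le h1γ.le hy.le hx (by ring)
  rw [le_div_iff₀ h1γ]
  have hsub : (1:ℝ) - γ = -γ + 1 := by ring
  have e1 : (x+1) ^ (1-γ) = (x+1) ^ (-γ) * (x+1) := by
    rw [hsub, Real.rpow_add hy, Real.rpow_one]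
  have e2 : x ^ (1-γ) = (x+1) ^ (-γ) * ((x+1) ^ γ * x ^ (1-γ)) := by
    rw [← mul_assoc, ← Real.rpow_add hy]
    simp
  have hpos : (0:ℝ) < (x+1) ^ (-γ) := Real.rpow_pos_of_pos hy _
  calc (x+1) ^ (-γ) * (1-γ) = (x+1) ^ (-γ) * ((x+1) - (γ * (x+1) + (1-γ) * x)) := by ring_nf
    _ ≤ (x+1) ^ (-γ) * ((x+1) - (x+1) ^ γ * x ^ (1-γ)) := by
        apply mul_le_mul_of_nonneg_left _ hpos.le
        linarith
    _ = (x+1) ^ (1-γ) - x ^ (1-γ) := by rw [mul_sub, ← e1, ← e2]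

lemma msum_bound (γ : ℝ) (hγ0 : 0 < γ) (hγ1 : γ < 1) :
    ∀ n : ℕ, 1 ≤ n → ∑ k ∈ Icc 1 n, ((k:ℝ)) ^ (-γ) ≤ 1 + ((n:ℝ) ^ (1-γ) - 1) / (1-γ) := by
  have h1γ : (0:ℝ) < 1 - γ := by linarith
  intro n hn
  induction n, hn using Nat.le_induction with
  | base => simp [Real.one_rpow]
  | succ n hn ih =>
    rw [Finset.sum_Icc_succ_top (by omega : 1 ≤ n + 1)]
    have hkey := key_rpow γ hγ0 hγ1 (n:ℝ) (Nat.cast_nonneg n)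
    have hdiv : ((n:ℝ)^(1-γ)-1)/(1-γ) + (((n:ℝ)+1)^(1-γ) - (n:ℝ)^(1-γ))/(1-γ)
        = (((n:ℝ)+1)^(1-γ)-1)/(1-γ) := by rw [← add_div]; ring_nf
    push_cast
    linarith

lemma msum_bound' (γ : ℝ) (hγ0 : 0 < γ) (hγ1 : γ < 1) (n : ℕ) (hn : 1 ≤ n) :
    ∑ k ∈ Icc 1 n, ((k:ℝ)) ^ (-γ) ≤ (1 + 1/(1-γ)) * (n:ℝ) ^ (1-γ) := by
  have h1γ : (0:ℝ) < 1 - γ := by linarith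
  have h1 : (1:ℝ) ≤ (n:ℝ) ^ (1-γ) := Real.one_le_rpow (by exact_mod_cast hn) h1γ.le
  have h2 := msum_bound γ hγ0 hγ1 n hn
  have h3 : ((n:ℝ)^(1-γ)-1)/(1-γ) ≤ (n:ℝ)^(1-γ)/(1-γ) := by gcongr; linarith
  have h4 : (n:ℝ)^(1-γ)/(1-γ) = 1/(1-γ)*(n:ℝ)^(1-γ) := by ring
  nlinarith

lemma cheb [MeasurableSpace Ω] (μ : Measure Ω) [IsProbabilityMeasure μ]
    (γ : ℝ)
    (Z : ℕ → Ω → ℕ) (hZmeas : ∀ k, Measurable (Z k))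
    (hZindep : iIndepFun Z μ)
    (hZone : ∀ k : ℕ, 1 ≤ k → μ {ω | Z k ω = 1} = ENNReal.ofReal ((k : ℝ) ^ (-γ)))
    (n i : ℕ) (hi : 1 ≤ i)
    (hm : ∑ k ∈ Icc 1 n, ((k:ℝ))^(-γ) ≤ (i:ℝ)/2) :
    μ {ω | i ≤ sc Z n ω}
      ≤ ENNReal.ofReal ((∑ k ∈ Icc 1 n, ((k:ℝ))^(-γ)) / ((i:ℝ)/2)^2) := by
  classical
  set m : ℝ := ∑ k ∈ Icc 1 n, ((k:ℝ))^(-γ) with hmdef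
  set φ : ℕ → ℝ := fun v => if v = 1 then 1 else 0 with hφ
  set W : ℕ → Ω → ℝ := fun k => φ ∘ Z k with hW
  have hWind : ∀ k, W k = ({ω | Z k ω = 1}).indicator (fun _ => (1:ℝ)) := by
    intro k; funext ω
    simp [hW, hφ, Set.indicator_apply, Set.mem_setOf_eq]
  have hs : ∀ k, MeasurableSet {ω | Z k ω = 1} := by
    intro k
    have := hZmeas k (MeasurableSet.singleton (1:ℕ))
    simpa [Set.preimage, Set.mem_singleton_iff] using this
  have hmem : ∀ k, MemLp (W k) 2 μ := by
    intro k
    rw [hWind k]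
    exact MemLp.indicator (hs k) (memLp_const 1)
  have hpk : ∀ k, 1 ≤ k → ∫ ω, W k ω ∂μ = ((k:ℝ))^(-γ) := by
    intro k hk
    rw [hWind k]
    rw [integral_indicator_const (1:ℝ) (hs k), measureReal_def, hZone k hk, smul_eq_mul, mul_one,
      ENNReal.toReal_ofReal (Real.rpow_nonneg (Nat.cast_nonneg k) _)]
  set X : Ω → ℝ := ∑ k ∈ Icc 1 n, W k with hX
  have hXint : μ[X] = m := by
    rw [hX]
    simp only [Finset.sum_apply]
    rw [integral_finset_sum _ (fun k _ => (hmem k).integrable one_le_two)]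
    exact Finset.sum_congr rfl (fun k hk => hpk k (Finset.mem_Icc.mp hk).1)
  have hWsq : ∀ k, (W k) ^ 2 = W k := by
    intro k; funext ω
    simp only [Pi.pow_apply, hW, hφ, Function.comp_apply]
    split <;> norm_num
  have hvarle : ∀ k, 1 ≤ k → variance (W k) μ ≤ ((k:ℝ))^(-γ) := by
    intro k hk
    calc variance (W k) μ ≤ μ[(W k)^2] :=
          variance_le_expectation_sq (hmem k).aestronglyMeasurable
      _ = ((k:ℝ))^(-γ) := by rw [hWsq k]; exact hpk k hk
  have hWindep : iIndepFun W μ :=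
    hZindep.comp (fun _ => φ) (fun _ => measurable_from_top)
  have hvar : variance X μ = ∑ k ∈ Icc 1 n, variance (W k) μ :=
    IndepFun.variance_sum (fun k _ => hmem k)
      (fun a _ b _ hab => hWindep.indepFun hab)
  have hvarm : variance X μ ≤ m := by
    rw [hvar, hmdef]
    exact Finset.sum_le_sum (fun k hk => hvarle k (Finset.mem_Icc.mp hk).1)
  have hmnonneg : 0 ≤ m :=
    Finset.sum_nonneg (fun k _ => Real.rpow_nonneg (Nat.cast_nonneg k) _)
  have hi2 : (0:ℝ) < (i:ℝ)/2 := by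
    have : (1:ℝ) ≤ (i:ℝ) := by exact_mod_cast hi
    linarith
  have hc : (0:ℝ) < (i:ℝ) - m := by linarith
  have hXsc : ∀ ω, X ω = (sc Z n ω : ℝ) := by
    intro ω
    rw [hX, sc, Finset.card_filter]
    push_cast
    simp only [Finset.sum_apply, hW, hφ, Function.comp_apply]
  have hsub : {ω | i ≤ sc Z n ω} ⊆ {ω | (i:ℝ) - m ≤ |X ω - μ[X]|} := by
    intro ω hω
    simp only [Set.mem_setOf_eq] at hω ⊢
    rw [hXint]
    have h1 : (i:ℝ) ≤ X ω := by
      rw [hXsc ω]; exact_mod_cast hω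
    have h2 : (i:ℝ) - m ≤ X ω - m := by linarith
    exact h2.trans (le_abs_self _)
  calc μ {ω | i ≤ sc Z n ω} ≤ μ {ω | (i:ℝ) - m ≤ |X ω - μ[X]|} := measure_mono hsub
    _ ≤ ENNReal.ofReal (variance X μ / ((i:ℝ) - m)^2) :=
        meas_ge_le_variance_div_sq (memLp_finset_sum' _ (fun k _ => hmem k)) hc
    _ ≤ ENNReal.ofReal (m / ((i:ℝ)/2)^2) := by
        apply ENNReal.ofReal_le_ofReal
        apply div_le_div₀ hmnonneg hvarm (by positivity)
        apply pow_le_pow_left₀ hi2.le (by linarith) 2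

lemma sc_meas' {m' : MeasurableSpace Ω} (Z : ℕ → Ω → ℕ)
    (t : ℕ) (hZm' : ∀ k ∈ Set.Icc 1 t, Measurable[m'] (Z k)) :
    Measurable[m'] (sc Z t) := by
  have h : sc Z t = fun ω => ∑ k ∈ Finset.Icc 1 t, (if Z k ω = 1 then 1 else 0) := by
    funext ω; rw [sc, Finset.card_filter]
  rw [h]
  apply Finset.measurable_sum
  intro k hk
  have hk' : k ∈ Set.Icc 1 t := by
    simp only [Set.mem_Icc]; exact Finset.mem_Icc.mp hk
  exact (measurable_from_top (f := fun v : ℕ => if v = 1 then (1:ℕ) else 0)).comp (hZm' k hk')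

lemma sc_measurable [MeasurableSpace Ω] (Z : ℕ → Ω → ℕ) (hZmeas : ∀ k, Measurable (Z k))
    (t : ℕ) : Measurable (sc Z t) :=
  sc_meas' Z t (fun k _ => hZmeas k)

lemma indep_mul [mΩ : MeasurableSpace Ω] (μ : Measure Ω) [IsProbabilityMeasure μ]
    (Z : ℕ → Ω → ℕ) (hZmeas : ∀ k, Measurable (Z k))
    (hZindep : iIndepFun Z μ)
    (i t j : ℕ) (ht : 1 ≤ t) (hj : t < j) :
    μ ({ω | sc Z t ω = i ∧ Z t ω = 1} ∩ {ω | Z j ω = 1})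
      = μ {ω | sc Z t ω = i ∧ Z t ω = 1} * μ {ω | Z j ω = 1} := by
  set m' : MeasurableSpace Ω :=
    ⨆ k ∈ Set.Icc 1 t, MeasurableSpace.comap (Z k) (inferInstance : MeasurableSpace ℕ) with hm'
  have hle : ∀ k, MeasurableSpace.comap (Z k) (inferInstance : MeasurableSpace ℕ) ≤ mΩ :=
    fun k => (hZmeas k).comap_le
  have hdisj : Disjoint (Set.Icc 1 t) ({j} : Set ℕ) := by
    simp only [Set.disjoint_singleton_right, Set.mem_Icc, not_and, not_le]
    omega
  have hind : Indep m' (MeasurableSpace.comap (Z j) (inferInstance : MeasurableSpace ℕ)) μ := by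
    have := indep_iSup_of_disjoint
      (m := fun k => MeasurableSpace.comap (Z k) (inferInstance : MeasurableSpace ℕ))
      hle hZindep.iIndep hdisj
    rwa [_root_.iSup_singleton] at this
  have hZm' : ∀ k ∈ Set.Icc 1 t, Measurable[m'] (Z k) := by
    intro k hk
    rw [measurable_iff_comap_le]
    exact le_biSup
      (fun k => MeasurableSpace.comap (Z k) (inferInstance : MeasurableSpace ℕ)) hk
  have hscm : Measurable[m'] (sc Z t) := sc_meas' Z t hZm'
  have hE : MeasurableSet[m'] {ω | sc Z t ω = i ∧ Z t ω = 1} := by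
    have h1 : MeasurableSet[m'] {ω | sc Z t ω = i} := by
      have := hscm (MeasurableSet.singleton i)
      simpa [Set.preimage, Set.mem_singleton_iff] using this
    have h2 : MeasurableSet[m'] {ω | Z t ω = 1} := by
      have := (hZm' t (by simp only [Set.mem_Icc]; omega)) (MeasurableSet.singleton 1)
      simpa [Set.preimage, Set.mem_singleton_iff] using this
    have : {ω | sc Z t ω = i ∧ Z t ω = 1} = {ω | sc Z t ω = i} ∩ {ω | Z t ω = 1} := rfl
    rw [this]
    exact h1.inter h2
  have hF : MeasurableSet[MeasurableSpace.comap (Z j) (inferInstance : MeasurableSpace ℕ)]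
      {ω | Z j ω = 1} := by
    refine ⟨{1}, trivial, ?_⟩
    ext ω; simp
  exact (hind.indepSet_of_measurableSet hE hF).measure_inter_eq_mul

lemma E_disjoint (Z : ℕ → Ω → ℕ) (i N : ℕ) :
    Pairwise (Function.onFun Disjoint
      (fun t => {ω | N < t ∧ (sc Z t ω = i ∧ Z t ω = 1)})) := by
  have key : ∀ t t' : ℕ, t < t' →
      ∀ ω, ω ∈ {ω | N < t ∧ (sc Z t ω = i ∧ Z t ω = 1)} →
        ω ∉ {ω | N < t' ∧ (sc Z t' ω = i ∧ Z t' ω = 1)} := by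
    rintro t t' htt ω ⟨hNt, hsc, hone⟩ ⟨hNt', hsc', hone'⟩
    have hss : (Finset.Icc 1 t).filter (fun n => Z n ω = 1)
        ⊂ (Finset.Icc 1 t').filter (fun n => Z n ω = 1) := by
      refine Finset.ssubset_iff_of_subset
        (Finset.filter_subset_filter _ (Finset.Icc_subset_Icc_right htt.le)) |>.mpr ?_
      refine ⟨t', ?_, ?_⟩
      · simp only [Finset.mem_filter, Finset.mem_Icc]
        exact ⟨⟨by omega, le_rfl⟩, hone'⟩
      · simp only [Finset.mem_filter, Finset.mem_Icc]
        rintro ⟨⟨-, h⟩, -⟩; omega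
    have := Finset.card_lt_card hss
    rw [sc] at hsc hsc'
    omega
  intro t t' htt'
  rcases lt_or_gt_of_ne htt' with h | h
  · exact Set.disjoint_left.mpr (fun ω hω hω' => key t t' h ω hω hω')
  · exact Set.disjoint_right.mpr (fun ω hω hω' => key t' t h ω hω hω')

lemma partB [MeasurableSpace Ω] (μ : Measure Ω) [IsProbabilityMeasure μ]
    (γ : ℝ) (Z : ℕ → Ω → ℕ) (hZmeas : ∀ k, Measurable (Z k))
    (hZindep : iIndepFun Z μ)
    (hZone : ∀ k : ℕ, 1 ≤ k → μ {ω | Z k ω = 1} = ENNReal.ofReal ((k : ℝ) ^ (-γ)))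
    (i N L : ℕ) (hN : 1 ≤ N) (c : ℝ)
    (hcb : ∀ j : ℕ, N < j → ((j:ℝ))^(-γ) ≤ c) :
    μ (⋃ t, ⋃ (_ : N < t), ({ω | sc Z t ω = i ∧ Z t ω = 1}
        ∩ ⋃ j ∈ Finset.Ioc t (t + L), {ω | Z j ω = 1}))
      ≤ (L : ℝ≥0∞) * ENNReal.ofReal c := by
  classical
  set E : ℕ → Set Ω := fun t => {ω | sc Z t ω = i ∧ Z t ω = 1} with hE
  set E' : ℕ → Set Ω := fun t => {ω | N < t ∧ (sc Z t ω = i ∧ Z t ω = 1)} with hE'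
  have hstep : ∀ t, N < t →
      μ (E t ∩ ⋃ j ∈ Finset.Ioc t (t + L), {ω | Z j ω = 1})
        ≤ ((L : ℝ≥0∞) * ENNReal.ofReal c) * μ (E t) := by
    intro t ht
    have h1 : E t ∩ ⋃ j ∈ Finset.Ioc t (t + L), {ω | Z j ω = 1}
        = ⋃ j ∈ Finset.Ioc t (t + L), (E t ∩ {ω | Z j ω = 1}) := by
      rw [Set.inter_iUnion₂]
    rw [h1]
    calc μ (⋃ j ∈ Finset.Ioc t (t + L), (E t ∩ {ω | Z j ω = 1}))
        ≤ ∑ j ∈ Finset.Ioc t (t + L), μ (E t ∩ {ω | Z j ω = 1}) :=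
          measure_biUnion_finset_le _ _
      _ ≤ ∑ j ∈ Finset.Ioc t (t + L), (ENNReal.ofReal c) * μ (E t) := by
          apply Finset.sum_le_sum
          intro j hj
          obtain ⟨hj1, hj2⟩ := Finset.mem_Ioc.mp hj
          rw [indep_mul μ Z hZmeas hZindep i t j (by omega) hj1]
          rw [hZone j (by omega), mul_comm]
          exact mul_le_mul_left (ENNReal.ofReal_le_ofReal (hcb j (by omega))) _
      _ = ((L : ℝ≥0∞) * ENNReal.ofReal c) * μ (E t) := by
          rw [Finset.sum_const, Nat.card_Ioc]
          simp [nsmul_eq_mul, mul_assoc]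
  calc μ (⋃ t, ⋃ (_ : N < t), (E t ∩ ⋃ j ∈ Finset.Ioc t (t + L), {ω | Z j ω = 1}))
      ≤ ∑' t, μ (⋃ (_ : N < t), (E t ∩ ⋃ j ∈ Finset.Ioc t (t + L), {ω | Z j ω = 1})) :=
        measure_iUnion_le _
    _ ≤ ∑' t, ((L : ℝ≥0∞) * ENNReal.ofReal c) * μ (E' t) := by
        apply ENNReal.tsum_le_tsum
        intro t
        by_cases ht : N < t
        · have he' : E' t = E t := by
            ext ω; simp [hE', hE, ht]
          simp only [ht, Set.iUnion_true, he']
          exact hstep t ht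
        · simp [ht]
    _ = ((L : ℝ≥0∞) * ENNReal.ofReal c) * ∑' t, μ (E' t) := ENNReal.tsum_mul_left
    _ ≤ ((L : ℝ≥0∞) * ENNReal.ofReal c) * 1 := by
        apply mul_le_mul_right
        have hmeas : ∀ t, MeasurableSet (E' t) := by
          intro t
          by_cases ht : N < t
          · have he' : E' t = E t := by ext ω; simp [hE', hE, ht]
            rw [he']
            have h1 : MeasurableSet {ω | sc Z t ω = i} := by
              have := sc_measurable Z hZmeas t (MeasurableSet.singleton i)
              simpa [Set.preimage, Set.mem_singleton_iff] using this
            have h2 : MeasurableSet {ω | Z t ω = 1} := by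
              have := hZmeas t (MeasurableSet.singleton 1)
              simpa [Set.preimage, Set.mem_singleton_iff] using this
            exact h1.inter h2
          · have he' : E' t = ∅ := by ext ω; simp [hE', ht]
            rw [he']; exact MeasurableSet.empty
        rw [← measure_iUnion (E_disjoint Z i N) hmeas]
        exact prob_le_one
    _ = (L : ℝ≥0∞) * ENNReal.ofReal c := mul_one _

lemma good_ae [MeasurableSpace Ω] (μ : Measure Ω) [IsProbabilityMeasure μ]
    (γ : ℝ) (hγ1 : γ < 1)
    (Z : ℕ → Ω → ℕ) (hZmeas : ∀ k, Measurable (Z k))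
    (hZindep : iIndepFun Z μ)
    (hZone : ∀ k : ℕ, 1 ≤ k → μ {ω | Z k ω = 1} = ENNReal.ofReal ((k : ℝ) ^ (-γ))) :
    μ {ω | ∀ N : ℕ, ∃ n, N < n ∧ Z n ω = 1}ᶜ = 0 := by
  classical
  set s : ℕ → Set Ω := fun n => {ω | Z n ω = 1} with hs
  have hsm : ∀ n, MeasurableSet (s n) := fun n => hZmeas n (MeasurableSet.singleton 1)
  have hindepset : iIndepSet s μ := by
    rw [iIndepSet_iff_iIndepSets_singleton hsm, iIndepSets_singleton_iff]
    intro t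
    apply hZindep.meas_biInter
    intro n _
    refine ⟨{1}, trivial, ?_⟩
    ext ω; simp [hs]
  have htop : ∑' n, μ (s n) = ∞ := by
    by_contra h
    have hsummable : Summable (fun n : ℕ => (μ (s n)).toReal) := ENNReal.summable_toReal h
    have h2 : Summable (fun n : ℕ => ((n:ℝ)) ^ (-γ)) := by
      rw [← summable_nat_add_iff 1]
      have heq : (fun n : ℕ => (((n+1:ℕ):ℝ)) ^ (-γ))
          = (fun n : ℕ => (μ (s (n+1))).toReal) := by
        funext n
        rw [hZone (n+1) (by omega), ENNReal.toReal_ofReal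
          (Real.rpow_nonneg (Nat.cast_nonneg _) _)]
      rw [show (fun n : ℕ => ((↑(n+1):ℝ)) ^ (-γ)) = (fun n : ℕ => (((n+1:ℕ):ℝ)) ^ (-γ)) by
        push_cast; rfl]
      rw [heq]
      exact hsummable.comp_injective (add_left_injective 1)
    rw [Real.summable_nat_rpow] at h2
    linarith
  have hone := measure_limsup_eq_one hsm hindepset htop
  have hsubset : limsup s atTop ⊆ {ω | ∀ N : ℕ, ∃ n, N < n ∧ Z n ω = 1} := by
    intro ω hω
    rw [limsup_eq_iInf_iSup_of_nat] at hω
    simp only [Set.iInf_eq_iInter, Set.iSup_eq_iUnion, Set.mem_iInter, Set.mem_iUnion] at hω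
    intro N
    obtain ⟨n, hn, hZn⟩ := hω (N+1)
    exact ⟨n, by omega, hZn⟩
  have hms : MeasurableSet (limsup s atTop) := by
    rw [limsup_eq_iInf_iSup_of_nat]
    simp only [Set.iInf_eq_iInter, Set.iSup_eq_iUnion]
    exact MeasurableSet.iInter (fun n => MeasurableSet.iUnion (fun i =>
      MeasurableSet.iUnion (fun _ => hsm i)))
  have hzero : μ (limsup s atTop)ᶜ = 0 := by
    rw [prob_compl_eq_zero_iff hms]; exact hone
  refine le_antisymm ?_ zero_le
  calc μ {ω | ∀ N : ℕ, ∃ n, N < n ∧ Z n ω = 1}ᶜ ≤ μ (limsup s atTop)ᶜ :=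
        measure_mono (Set.compl_subset_compl.mpr hsubset)
    _ = 0 := hzero

lemma param_facts (γ ε : ℝ) (hγ₁ : 2 / 3 < γ) (hγ₂ : γ < 1)
    (hε₁ : 0 < ε) (hε₂ : ε < γ / (1 - γ) - 2) :
    0 < ((2+ε)/γ + 1/(1-γ))/2 ∧
    2 + ε < (((2+ε)/γ + 1/(1-γ))/2) * γ ∧
    (((2+ε)/γ + 1/(1-γ))/2) * (1-γ) < 1 := by
  have hγ0 : (0:ℝ) < γ := by linarith
  have h1γ : (0:ℝ) < 1 - γ := by linarith
  have hab : (2+ε)/γ < 1/(1-γ) := by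
    rw [div_lt_div_iff₀ hγ0 h1γ]
    have h' : (ε + 2) * (1-γ) < γ := by
      have h2 : ε + 2 < γ / (1 - γ) := by linarith
      calc (ε + 2) * (1-γ) < (γ / (1-γ)) * (1-γ) :=
            mul_lt_mul_of_pos_right h2 h1γ
        _ = γ := div_mul_cancel₀ _ h1γ.ne'
    nlinarith
  have hu : (2+ε)/γ * γ = 2+ε := div_mul_cancel₀ _ hγ0.ne'
  have hv : 1/(1-γ) * (1-γ) = 1 := div_mul_cancel₀ _ h1γ.ne'
  have hupos : 0 < (2+ε)/γ := by positivity
  refine ⟨by positivity, ?_, ?_⟩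
  · nlinarith [mul_pos (sub_pos.mpr hab) hγ0]
  · nlinarith [mul_pos (sub_pos.mpr hab) h1γ]

end GrowthAux

/-- **Growth events do not occur too early (Borel–Cantelli consequence).**
Let `γ ∈ (2/3, 1)` and `0 < ε < γ/(1-γ) - 2`.  Let `(Z_k)_{k≥1}` be independent with
`P(Z_k = 1) = k^{-γ} = 1 - P(Z_k = 0)` and let `τ_k` be the growth times, `Δτ_k = τ_{k+1} - τ_k`.
Then `P(Δτ_i < i^{1+ε} for infinitely many i) = 0`. -/
theorem growth_increment_eventually_large
    {Ω : Type*} [MeasurableSpace Ω] (μ : Measure Ω) [IsProbabilityMeasure μ]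
    (γ ε : ℝ) (hγ₁ : 2 / 3 < γ) (hγ₂ : γ < 1)
    (hε₁ : 0 < ε) (hε₂ : ε < γ / (1 - γ) - 2)
    (Z : ℕ → Ω → ℕ) (hZmeas : ∀ k, Measurable (Z k))
    (hZindep : iIndepFun Z μ)
    (hZone : ∀ k : ℕ, 1 ≤ k → μ {ω | Z k ω = 1} = ENNReal.ofReal ((k : ℝ) ^ (-γ)))
    (hZzero : ∀ k : ℕ, 1 ≤ k → μ {ω | Z k ω = 0} = ENNReal.ofReal (1 - (k : ℝ) ^ (-γ))) :
    μ {ω | ∃ᶠ i in atTop,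
        ((growthTime Z (i + 1) ω - growthTime Z i ω : ℕ) : ℝ) < (i : ℝ) ^ (1 + ε)} = 0 := by
  classical
  have hγ0 : (0:ℝ) < γ := by linarith
  have h1γ : (0:ℝ) < 1 - γ := by linarith
  obtain ⟨hαpos, hαγ, hβlt⟩ := GrowthAux.param_facts γ ε hγ₁ hγ₂ hε₁ hε₂
  set α : ℝ := ((2+ε)/γ + 1/(1-γ))/2 with hαdef
  set β : ℝ := α * (1-γ) with hβdef
  set C₁ : ℝ := 2*(1 + 1/(1-γ)) with hC₁def
  have hC₁pos : 0 < C₁ := by rw [hC₁def]; positivity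
  set nn : ℕ → ℕ := fun i => ⌈(i:ℝ)^α⌉₊ with hnndef
  set LL : ℕ → ℕ := fun i => ⌈(i:ℝ)^(1+ε)⌉₊ with hLLdef
  set A1 : ℕ → Set Ω := fun i => {ω | i ≤ GrowthAux.sc Z (nn i) ω} with hA1def
  set A2 : ℕ → Set Ω := fun i => ⋃ t, ⋃ (_ : nn i < t),
      ({ω | GrowthAux.sc Z t ω = i ∧ Z t ω = 1}
        ∩ ⋃ j ∈ Finset.Ioc t (t + LL i), {ω | Z j ω = 1}) with hA2def
  set A : ℕ → Set Ω := fun i => A1 i ∪ A2 i with hAdef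
  set G : Set Ω := {ω | ∀ N : ℕ, ∃ n, N < n ∧ Z n ω = 1} with hGdef
  -- elementary facts
  have hip : ∀ i : ℕ, 1 ≤ i → (0:ℝ) < (i:ℝ) := fun i hi => by exact_mod_cast hi
  have hi1r : ∀ i : ℕ, 1 ≤ i → (1:ℝ) ≤ (i:ℝ) := fun i hi => by exact_mod_cast hi
  have hnn_ge : ∀ i : ℕ, ((i:ℝ))^α ≤ (nn i : ℝ) := fun i => Nat.le_ceil _
  have hnn_one_le : ∀ i : ℕ, 1 ≤ i → (1:ℝ) ≤ ((i:ℝ))^α :=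
    fun i hi => Real.one_le_rpow (hi1r i hi) hαpos.le
  have hnn1 : ∀ i : ℕ, 1 ≤ i → 1 ≤ nn i := by
    intro i hi
    have h2 : (1:ℝ) ≤ (nn i : ℝ) := le_trans (hnn_one_le i hi) (hnn_ge i)
    exact_mod_cast h2
  have hnn_le : ∀ i : ℕ, 1 ≤ i → (nn i : ℝ) ≤ 2 * ((i:ℝ))^α := by
    intro i hi
    have h1 : (nn i : ℝ) < ((i:ℝ))^α + 1 :=
      Nat.ceil_lt_add_one (Real.rpow_nonneg (Nat.cast_nonneg i) _)
    have := hnn_one_le i hi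
    linarith
  -- bound on A2
  have hA2bound : ∀ i : ℕ, 1 ≤ i → μ (A2 i) ≤ ENNReal.ofReal (2*((i:ℝ))^(1+ε-α*γ)) := by
    intro i hi
    have hstep := GrowthAux.partB μ γ Z hZmeas hZindep hZone i (nn i) (LL i)
      (hnn1 i hi) (((i:ℝ))^(α*(-γ)))
      (by
        intro j hj
        have hj1 : ((i:ℝ))^α ≤ (j:ℝ) := by
          refine le_trans (hnn_ge i) ?_
          exact_mod_cast hj.le
        have hposα : (0:ℝ) < ((i:ℝ))^α := Real.rpow_pos_of_pos (hip i hi) _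
        have h2 : ((j:ℝ))^(-γ) ≤ (((i:ℝ))^α)^(-γ) :=
          Real.rpow_le_rpow_of_nonpos hposα hj1 (by linarith)
        calc ((j:ℝ))^(-γ) ≤ (((i:ℝ))^α)^(-γ) := h2
          _ = ((i:ℝ))^(α*(-γ)) := by
              rw [← Real.rpow_mul (Nat.cast_nonneg i)])
    refine le_trans hstep ?_
    have hLLle : ((LL i : ℕ) : ℝ) ≤ 2*((i:ℝ))^(1+ε) := by
      have h1 : ((LL i : ℕ) : ℝ) < ((i:ℝ))^(1+ε) + 1 :=
        Nat.ceil_lt_add_one (Real.rpow_nonneg (Nat.cast_nonneg i) _)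
      have h2 : (1:ℝ) ≤ ((i:ℝ))^(1+ε) := Real.one_le_rpow (hi1r i hi) (by linarith)
      linarith
    calc ((LL i : ℕ) : ℝ≥0∞) * ENNReal.ofReal (((i:ℝ))^(α*(-γ)))
        = ENNReal.ofReal ((LL i : ℕ) : ℝ) * ENNReal.ofReal (((i:ℝ))^(α*(-γ))) := by
          rw [ENNReal.ofReal_natCast]
      _ ≤ ENNReal.ofReal (2*((i:ℝ))^(1+ε)) * ENNReal.ofReal (((i:ℝ))^(α*(-γ))) := by
          exact mul_le_mul_left (ENNReal.ofReal_le_ofReal hLLle) _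
      _ = ENNReal.ofReal (2*((i:ℝ))^(1+ε) * ((i:ℝ))^(α*(-γ))) := by
          rw [← ENNReal.ofReal_mul (by positivity)]
      _ = ENNReal.ofReal (2*((i:ℝ))^(1+ε-α*γ)) := by
          congr 1
          rw [mul_assoc, ← Real.rpow_add (hip i hi)]
          ring_nf
  -- choice of i₀
  have htend : Tendsto (fun i : ℕ => ((i:ℝ))^(1-β)) atTop atTop :=
    (tendsto_rpow_atTop (by linarith)).comp tendsto_natCast_atTop_atTop
  obtain ⟨i₀, hi₀⟩ := eventually_atTop.mp
    ((htend.eventually_ge_atTop (2*C₁)).and (eventually_ge_atTop 1))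
  -- bound on A1
  have hA1bound : ∀ i : ℕ, i₀ ≤ i → μ (A1 i) ≤ ENNReal.ofReal (4*C₁*((i:ℝ))^(β-2)) := by
    intro i hi
    obtain ⟨hgrow, hi1⟩ := hi₀ i hi
    have hipos := hip i hi1
    set m : ℝ := ∑ k ∈ Icc 1 (nn i), ((k:ℝ))^(-γ) with hmdef
    have hm1 : m ≤ (1 + 1/(1-γ)) * ((nn i : ℕ):ℝ)^(1-γ) :=
      GrowthAux.msum_bound' γ hγ0 hγ₂ (nn i) (hnn1 i hi1)
    have hm2 : ((nn i : ℕ):ℝ)^(1-γ) ≤ (2*((i:ℝ))^α)^(1-γ) :=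
      Real.rpow_le_rpow (Nat.cast_nonneg _) (hnn_le i hi1) (by linarith)
    have hm3 : (2*((i:ℝ))^α)^(1-γ) ≤ 2 * ((i:ℝ))^β := by
      rw [Real.mul_rpow (by norm_num) (Real.rpow_nonneg (Nat.cast_nonneg i) _)]
      have h1 : (2:ℝ)^(1-γ) ≤ 2 := by
        calc (2:ℝ)^(1-γ) ≤ (2:ℝ)^(1:ℝ) :=
              Real.rpow_le_rpow_of_exponent_le (by norm_num) (by linarith)
          _ = 2 := Real.rpow_one 2
      have h2 : (((i:ℝ))^α)^(1-γ) = ((i:ℝ))^β := by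
        rw [hβdef, Real.rpow_mul (Nat.cast_nonneg i)]
      rw [h2]
      exact mul_le_mul_of_nonneg_right h1 (Real.rpow_nonneg (Nat.cast_nonneg i) _)
    have hmC : m ≤ C₁ * ((i:ℝ))^β := by
      have hfac : (0:ℝ) ≤ 1 + 1/(1-γ) := by positivity
      calc m ≤ (1 + 1/(1-γ)) * ((nn i : ℕ):ℝ)^(1-γ) := hm1
        _ ≤ (1 + 1/(1-γ)) * (2 * ((i:ℝ))^β) := by
            apply mul_le_mul_of_nonneg_left (le_trans hm2 hm3) hfac
        _ = C₁ * ((i:ℝ))^β := by rw [hC₁def]; ring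
    have hhalf : C₁ * ((i:ℝ))^β ≤ (i:ℝ)/2 := by
      have hbpos : (0:ℝ) ≤ ((i:ℝ))^β := Real.rpow_nonneg (Nat.cast_nonneg i) _
      have h1 : 2*C₁ * ((i:ℝ))^β ≤ ((i:ℝ))^(1-β) * ((i:ℝ))^β :=
        mul_le_mul_of_nonneg_right hgrow hbpos
      have h2 : ((i:ℝ))^(1-β) * ((i:ℝ))^β = (i:ℝ) := by
        rw [← Real.rpow_add hipos]
        norm_num
      linarith
    have hm : m ≤ (i:ℝ)/2 := le_trans hmC hhalf
    have hch := GrowthAux.cheb μ γ Z hZmeas hZindep hZone (nn i) i hi1 hm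
    refine le_trans hch (ENNReal.ofReal_le_ofReal ?_)
    have heq2 : (C₁ * ((i:ℝ))^β)/(((i:ℝ)/2)^2) = 4*C₁*((i:ℝ))^(β-2) := by
      have h2c : ((i:ℝ))^((2:ℝ)) = (i:ℝ)^(2:ℕ) := by
        rw [← Real.rpow_natCast (i:ℝ) 2]; norm_num
      rw [Real.rpow_sub hipos, h2c]
      field_simp
      ring
    calc m/(((i:ℝ)/2)^2) ≤ (C₁ * ((i:ℝ))^β)/(((i:ℝ)/2)^2) := by gcongr
      _ = 4*C₁*((i:ℝ))^(β-2) := heq2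
  -- summable bound
  set f : ℕ → ℝ := fun i => 4*C₁*((i:ℝ))^(β-2) + 2*((i:ℝ))^(1+ε-α*γ) with hfdef
  have hfnonneg : ∀ i, 0 ≤ f i := by
    intro i
    have h1 : (0:ℝ) ≤ ((i:ℝ))^(β-2) := Real.rpow_nonneg (Nat.cast_nonneg i) _
    have h2 : (0:ℝ) ≤ ((i:ℝ))^(1+ε-α*γ) := Real.rpow_nonneg (Nat.cast_nonneg i) _
    rw [hfdef]
    positivity
  have hfsummable : Summable f := by
    apply Summable.add
    · exact (Real.summable_nat_rpow.mpr (by linarith)).mul_left _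
    · exact (Real.summable_nat_rpow.mpr (by linarith)).mul_left _
  have hAbound : ∀ i : ℕ, i₀ ≤ i → μ (A i) ≤ ENNReal.ofReal (f i) := by
    intro i hi
    have hi1 : 1 ≤ i := (hi₀ i hi).2
    calc μ (A i) ≤ μ (A1 i) + μ (A2 i) := measure_union_le _ _
      _ ≤ ENNReal.ofReal (4*C₁*((i:ℝ))^(β-2)) + ENNReal.ofReal (2*((i:ℝ))^(1+ε-α*γ)) :=
          add_le_add (hA1bound i hi) (hA2bound i hi1)
      _ = ENNReal.ofReal (f i) := by
          rw [hfdef, ENNReal.ofReal_add]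
          · have h1 : (0:ℝ) ≤ ((i:ℝ))^(β-2) := Real.rpow_nonneg (Nat.cast_nonneg i) _
            positivity
          · have h2 : (0:ℝ) ≤ ((i:ℝ))^(1+ε-α*γ) := Real.rpow_nonneg (Nat.cast_nonneg i) _
            positivity
  -- the series of measures converges
  have htsum : ∑' i, μ (A i) ≠ ∞ := by
    have hbound : ∀ i : ℕ, μ (A i) ≤ ENNReal.ofReal (f i) + (if i < i₀ then 1 else 0) := by
      intro i
      by_cases hi : i < i₀
      · simp only [hi, if_true]
        calc μ (A i) ≤ 1 := prob_le_one
          _ ≤ ENNReal.ofReal (f i) + 1 := le_add_self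
      · simp only [hi, if_false, add_zero]
        exact hAbound i (by omega)
    have h1 : ∑' i, μ (A i)
        ≤ ∑' i : ℕ, ENNReal.ofReal (f i) + ∑' i : ℕ, (if i < i₀ then (1:ℝ≥0∞) else 0) := by
      rw [← ENNReal.tsum_add]
      exact ENNReal.tsum_le_tsum hbound
    have h2 : ∑' i : ℕ, ENNReal.ofReal (f i) ≠ ∞ := by
      rw [← ENNReal.ofReal_tsum_of_nonneg hfnonneg hfsummable]
      exact ENNReal.ofReal_ne_top
    have h3 : ∑' i : ℕ, (if i < i₀ then (1:ℝ≥0∞) else 0) ≠ ∞ := by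
      have : ∑' i : ℕ, (if i < i₀ then (1:ℝ≥0∞) else 0)
          = ∑ i ∈ Finset.range i₀, (if i < i₀ then (1:ℝ≥0∞) else 0) := by
        apply tsum_eq_sum
        intro b hb
        simp only [Finset.mem_range] at hb
        simp [hb]
      rw [this]
      exact (ENNReal.sum_lt_top.mpr (fun i _ => by
        split <;> simp [ENNReal.one_lt_top])).ne
    exact ne_top_of_le_ne_top (ENNReal.add_ne_top.mpr ⟨h2, h3⟩) h1
  -- inclusion of the bad event
  have hsubset : {ω | ∃ᶠ i in atTop,
        ((growthTime Z (i + 1) ω - growthTime Z i ω : ℕ) : ℝ) < (i : ℝ) ^ (1 + ε)}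
      ⊆ Gᶜ ∪ limsup A atTop := by
    intro ω hω
    by_cases hGω : ω ∈ G
    · right
      rw [limsup_eq_iInf_iSup_of_nat]
      simp only [Set.iInf_eq_iInter, Set.iSup_eq_iUnion, Set.mem_iInter, Set.mem_iUnion]
      intro N
      simp only [Set.mem_setOf_eq] at hω
      obtain ⟨i, hiN, hprop⟩ := frequently_atTop.mp hω (max N 1)
      have hi1 : 1 ≤ i := le_trans (le_max_right N 1) hiN
      have hΔ : growthTime Z (i+1) ω - growthTime Z i ω < LL i := by
        have h1 : ((growthTime Z (i + 1) ω - growthTime Z i ω : ℕ) : ℝ) < ((LL i : ℕ) : ℝ) :=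
          lt_of_lt_of_le hprop (Nat.le_ceil _)
        exact_mod_cast h1
      refine ⟨i, le_trans (le_max_left N 1) hiN, ?_⟩
      rcases GrowthAux.incl Z ω hGω i hi1 (nn i) (LL i) hΔ with
        h | ⟨t, ht1, ht2, j, hj1, hj2, hj3⟩
      · exact Or.inl h
      · refine Or.inr ?_
        refine Set.mem_iUnion.mpr ⟨t, Set.mem_iUnion.mpr ⟨ht1, ht2, ?_⟩⟩
        refine Set.mem_iUnion.mpr ⟨j, Set.mem_iUnion.mpr ⟨Finset.mem_Ioc.mpr ⟨hj1, hj2⟩, hj3⟩⟩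
    · exact Or.inl hGω
  -- conclusion
  have hGc : μ Gᶜ = 0 := GrowthAux.good_ae μ γ hγ₂ Z hZmeas hZindep hZone
  have hlim : μ (limsup A atTop) = 0 := measure_limsup_atTop_eq_zero htsum
  refine le_antisymm ?_ zero_le
  calc μ {ω | ∃ᶠ i in atTop,
        ((growthTime Z (i + 1) ω - growthTime Z i ω : ℕ) : ℝ) < (i : ℝ) ^ (1 + ε)}
      ≤ μ (Gᶜ ∪ limsup A atTop) := measure_mono hsubset
    _ ≤ μ Gᶜ + μ (limsup A atTop) := measure_union_le _ _
    _ = 0 := by rw [hGc, hlim, add_zero]
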